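/- Let K be a field, let A ∈ K^{n×n}, B ∈ K^{m×m}, and C ∈ K^{n×m}. Then there exist matrices X, Y ∈ K^{n×m} with A·X − Y·B = C if and only if the block matrices [[A, C],[0, B]] and [[A, 0],[0, B]] (both of size (n+m)×(n+m)) are equivalent, i.e., there exist invertible matrices P, Q ∈ K^{(n+m)×(n+m)} with P·[[A, C],[0, B]]·Q = [[A, 0],[0, B]]. (Roth's solvability criterion for the generalized Sylvester matrix equation.) -/

import Mathlib

open Matrix BigOperators

section RothAux

variable {K : Type*} [Field K] {n m : ℕ}

/-- Extend a vector on `Fin n` by zero to `Fin n ⊕ Fin m`. -/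
noncomputable def rothElimL (K : Type*) [Field K] (n m : ℕ) :
    (Fin n → K) →ₗ[K] (Fin n ⊕ Fin m → K) where
  toFun x := Sum.elim x 0
  map_add' x y := by funext i; cases i <;> simp
  map_smul' r x := by funext i; cases i <;> simp

lemma rothElimL_inj : Function.Injective (rothElimL K n m) := by
  intro x y h
  funext i
  have := congrFun h (Sum.inl i)
  simpa [rothElimL] using this

/-- Extend a vector on `Fin m` by zero to `Fin n ⊕ Fin m`. -/
noncomputable def rothElimR (K : Type*) [Field K] (n m : ℕ) :
    (Fin m → K) →ₗ[K] (Fin n ⊕ Fin m → K) where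
  toFun y := Sum.elim 0 y
  map_add' x y := by funext i; cases i <;> simp
  map_smul' r x := by funext i; cases i <;> simp

lemma rothElimR_inj : Function.Injective (rothElimR K n m) := by
  intro x y h
  funext i
  have := congrFun h (Sum.inr i)
  simpa [rothElimR] using this

/-- Lower bound for the rank of the block matrix `[[A, C], [0, B]]`. -/
lemma roth_rank_lower (A : Matrix (Fin n) (Fin n) K) (B : Matrix (Fin m) (Fin m) K)
    (C : Matrix (Fin n) (Fin m) K) :
    B.rank + Module.finrank K
      ↑(LinearMap.range A.mulVecLin ⊔
        Submodule.map C.mulVecLin (LinearMap.ker B.mulVecLin)) ≤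
      (Matrix.fromBlocks A C 0 B).rank := by
  classical
  set S : Submodule K (Fin n → K) :=
    LinearMap.range A.mulVecLin ⊔ Submodule.map C.mulVecLin (LinearMap.ker B.mulVecLin)
    with hS
  set Φ : (Fin n ⊕ Fin m → K) →ₗ[K] (Fin n ⊕ Fin m → K) :=
    (Matrix.fromBlocks A C 0 B).mulVecLin with hΦ
  set R : Submodule K (Fin n ⊕ Fin m → K) := LinearMap.range Φ with hR
  set q : (Fin n ⊕ Fin m → K) →ₗ[K] (Fin m → K) :=
    LinearMap.funLeft K K Sum.inr with hq
  have hΦapp : ∀ f : Fin n ⊕ Fin m → K,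
      Φ f = Sum.elim (A *ᵥ (f ∘ Sum.inl) + C *ᵥ (f ∘ Sum.inr)) (B *ᵥ (f ∘ Sum.inr)) := by
    intro f
    simp only [hΦ, Matrix.mulVecLin_apply, Matrix.fromBlocks_mulVec, Matrix.zero_mulVec,
      zero_add]
  -- rank-nullity for q restricted to R
  have hrn : Module.finrank K ↥(Submodule.map q R) + Module.finrank K ↥(R ⊓ LinearMap.ker q)
      = Module.finrank K ↥R := by
    have h1 := LinearMap.finrank_range_add_finrank_ker (q.domRestrict R)
    rw [LinearMap.range_domRestrict, LinearMap.ker_domRestrict] at h1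
    rw [← h1]
    congr 1
    rw [← Submodule.map_comap_subtype]
    exact Submodule.finrank_map_subtype_eq R _
  -- the image of R under q is the range of B.mulVecLin
  have hmap : Submodule.map q R = LinearMap.range B.mulVecLin := by
    apply le_antisymm
    · rintro _ ⟨w, ⟨f, rfl⟩, rfl⟩
      refine ⟨f ∘ Sum.inr, ?_⟩
      rw [hΦapp f]
      funext i
      simp [hq, LinearMap.funLeft, Matrix.mulVecLin_apply]
    · rintro _ ⟨y, rfl⟩
      refine ⟨Φ (Sum.elim 0 y), ⟨Sum.elim 0 y, rfl⟩, ?_⟩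
      rw [hΦapp]
      funext i
      simp [hq, LinearMap.funLeft, Sum.elim_comp_inr, Matrix.mulVecLin_apply]
  -- the extended copy of S sits inside R ⊓ ker q
  have hSle : Submodule.map (rothElimL K n m) S ≤ R ⊓ LinearMap.ker q := by
    rintro _ ⟨z, hz, rfl⟩
    obtain ⟨u, hu, v, hv, rfl⟩ := Submodule.mem_sup.mp hz
    obtain ⟨x₀, rfl⟩ := hu
    obtain ⟨w, hw, rfl⟩ := hv
    constructor
    · refine ⟨Sum.elim x₀ w, ?_⟩
      rw [hΦapp]
      have hbw : B *ᵥ w = 0 := by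
        simpa [Matrix.mulVecLin_apply] using hw
      funext i
      cases i with
      | inl i =>
          simp [rothElimL, Sum.elim_comp_inl, Sum.elim_comp_inr, Matrix.mulVecLin_apply]
      | inr i =>
          simp [rothElimL, Sum.elim_comp_inl, Sum.elim_comp_inr, hbw]
    · exact LinearMap.mem_ker.mpr (by funext i; simp [hq, LinearMap.funLeft, rothElimL])
  have hfinS : Module.finrank K ↥(Submodule.map (rothElimL K n m) S) = Module.finrank K ↥S :=
    (LinearEquiv.finrank_eq (Submodule.equivMapOfInjective _ rothElimL_inj S)).symm
  have hle2 : Module.finrank K ↥S ≤ Module.finrank K ↥(R ⊓ LinearMap.ker q) := by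
    rw [← hfinS]
    exact Submodule.finrank_mono hSle
  calc B.rank + Module.finrank K ↥S
      = Module.finrank K ↥(Submodule.map q R) + Module.finrank K ↥S := by
        rw [hmap]; rfl
    _ ≤ Module.finrank K ↥(Submodule.map q R) + Module.finrank K ↥(R ⊓ LinearMap.ker q) := by
        omega
    _ = Module.finrank K ↥R := hrn
    _ = (Matrix.fromBlocks A C 0 B).rank := rfl

/-- Upper bound for the rank of the block-diagonal matrix. -/
lemma roth_rank_diag_upper (A : Matrix (Fin n) (Fin n) K) (B : Matrix (Fin m) (Fin m) K) :
    (Matrix.fromBlocks A 0 0 B).rank ≤ A.rank + B.rank := by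
  classical
  set Φ : (Fin n ⊕ Fin m → K) →ₗ[K] (Fin n ⊕ Fin m → K) :=
    (Matrix.fromBlocks A (0 : Matrix (Fin n) (Fin m) K) 0 B).mulVecLin with hΦ
  have hle : LinearMap.range Φ ≤
      Submodule.map (rothElimL K n m) (LinearMap.range A.mulVecLin) ⊔
        Submodule.map (rothElimR K n m) (LinearMap.range B.mulVecLin) := by
    rintro _ ⟨f, rfl⟩
    have : Φ f = rothElimL K n m (A *ᵥ (f ∘ Sum.inl)) + rothElimR K n m (B *ᵥ (f ∘ Sum.inr)) := by
      funext i
      cases i with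
      | inl i => simp [hΦ, Matrix.mulVecLin_apply, Matrix.fromBlocks_mulVec,
          Matrix.zero_mulVec, rothElimL, rothElimR]
      | inr i => simp [hΦ, Matrix.mulVecLin_apply, Matrix.fromBlocks_mulVec,
          Matrix.zero_mulVec, rothElimL, rothElimR]
    rw [this]
    exact Submodule.add_mem_sup ⟨A *ᵥ (f ∘ Sum.inl), ⟨f ∘ Sum.inl, rfl⟩, rfl⟩
      ⟨B *ᵥ (f ∘ Sum.inr), ⟨f ∘ Sum.inr, rfl⟩, rfl⟩
  have h1 : (Matrix.fromBlocks A (0 : Matrix (Fin n) (Fin m) K) 0 B).rank ≤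
      Module.finrank K ↥(Submodule.map (rothElimL K n m) (LinearMap.range A.mulVecLin) ⊔
        Submodule.map (rothElimR K n m) (LinearMap.range B.mulVecLin)) :=
    Submodule.finrank_mono hle
  have h2 := Submodule.finrank_sup_add_finrank_inf_eq
    (Submodule.map (rothElimL K n m) (LinearMap.range A.mulVecLin))
    (Submodule.map (rothElimR K n m) (LinearMap.range B.mulVecLin))
  have h3 : Module.finrank K ↥(Submodule.map (rothElimL K n m) (LinearMap.range A.mulVecLin))
      = A.rank :=
    (LinearEquiv.finrank_eq (Submodule.equivMapOfInjective _ rothElimL_inj _)).symm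
  have h4 : Module.finrank K ↥(Submodule.map (rothElimR K n m) (LinearMap.range B.mulVecLin))
      = B.rank :=
    (LinearEquiv.finrank_eq (Submodule.equivMapOfInjective _ rothElimR_inj _)).symm
  omega

/-- From the subspace condition to solvability of the Sylvester equation. -/
lemma roth_solve (A : Matrix (Fin n) (Fin n) K) (B : Matrix (Fin m) (Fin m) K)
    (C : Matrix (Fin n) (Fin m) K)
    (hS : Submodule.map C.mulVecLin (LinearMap.ker B.mulVecLin) ≤
      LinearMap.range A.mulVecLin) :
    ∃ X Y : Matrix (Fin n) (Fin m) K, A * X - Y * B = C := by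
  classical
  set a := A.mulVecLin with ha
  set b := B.mulVecLin with hb
  set c := C.mulVecLin with hc
  -- complement of ker b
  obtain ⟨N', hN'⟩ := Submodule.exists_isCompl (LinearMap.ker b)
  set π : (Fin m → K) →ₗ[K] ↥(LinearMap.ker b) :=
    (LinearMap.ker b).projectionOnto N' hN' with hπ
  set pN : (Fin m → K) →ₗ[K] (Fin m → K) := (LinearMap.ker b).subtype ∘ₗ π with hpN
  set g : (Fin m → K) →ₗ[K] (Fin n → K) := c ∘ₗ pN with hg
  set h : (Fin m → K) →ₗ[K] (Fin n → K) := c - g with hh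
  -- h vanishes on ker b
  have hker : LinearMap.ker b ≤ LinearMap.ker h := by
    intro v hv
    rw [LinearMap.mem_ker]
    have : pN v = v := by
      simp [hpN, hπ, Submodule.projectionOnto_apply_left hN' ⟨v, hv⟩]
    simp [hh, hg, LinearMap.sub_apply, LinearMap.comp_apply, this]
  -- g has range in range a
  have hgrange : ∀ v, g v ∈ LinearMap.range a := by
    intro v
    apply hS
    exact ⟨pN v, (π v).2, rfl⟩
  -- factor g through a
  obtain ⟨x, hx⟩ := Module.projective_lifting_property a.rangeRestrict
    (g.codRestrict (LinearMap.range a) hgrange) (LinearMap.surjective_rangeRestrict a)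
  have hax : ∀ v, a (x v) = g v := by
    intro v
    simpa using congrArg Subtype.val (LinearMap.congr_fun hx v)
  -- factor h through b
  set e := b.quotKerEquivRange with he
  obtain ⟨W, hW⟩ := Submodule.exists_isCompl (LinearMap.range b)
  set ρ : (Fin m → K) →ₗ[K] ↥(LinearMap.range b) :=
    (LinearMap.range b).projectionOnto W hW with hρ
  set hbar := (LinearMap.ker b).liftQ h hker with hhbar
  set y : (Fin m → K) →ₗ[K] (Fin n → K) := hbar ∘ₗ (e.symm.toLinearMap ∘ₗ ρ) with hy
  have hyb : ∀ v, y (b v) = h v := by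
    intro v
    have hmem : b v ∈ LinearMap.range b := ⟨v, rfl⟩
    have h1 : ρ (b v) = ⟨b v, hmem⟩ :=
      Submodule.projectionOnto_apply_left hW ⟨b v, hmem⟩
    have h2 : e (Submodule.Quotient.mk v) = ⟨b v, hmem⟩ := by
      apply Subtype.ext
      simp [he, LinearMap.quotKerEquivRange_apply_mk]
    have h3 : e.symm ⟨b v, hmem⟩ = Submodule.Quotient.mk v := by
      rw [← h2, LinearEquiv.symm_apply_apply]
    calc y (b v) = hbar (e.symm (ρ (b v))) := rfl
      _ = hbar (Submodule.Quotient.mk v) := by rw [h1, h3]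
      _ = h v := Submodule.liftQ_apply _ _ _
  -- assemble
  refine ⟨LinearMap.toMatrix' x, -(LinearMap.toMatrix' y), ?_⟩
  apply Matrix.toLin'.injective
  rw [map_sub, Matrix.toLin'_mul, Matrix.toLin'_mul, map_neg]
  refine LinearMap.ext fun v => ?_
  have hgch : g v + h v = c v := by simp [hh]
  have h4 : a (x v) + y (b v) = c v := by rw [hax, hyb, hgch]
  have h5 : Matrix.toLin' A = a := Matrix.toLin'_apply' A
  have h6 : Matrix.toLin' B = b := Matrix.toLin'_apply' B
  have h7 : Matrix.toLin' C = c := Matrix.toLin'_apply' C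
  simp only [LinearMap.sub_apply, LinearMap.comp_apply, LinearMap.neg_apply,
    Matrix.toLin'_toMatrix', h5, h6, h7, sub_neg_eq_add]
  exact h4

end RothAux

theorem stmt19 (K : Type*) [Field K] (n m : ℕ)
    (A : Matrix (Fin n) (Fin n) K) (B : Matrix (Fin m) (Fin m) K)
    (C : Matrix (Fin n) (Fin m) K) :
    (∃ X Y : Matrix (Fin n) (Fin m) K, A * X - Y * B = C) ↔
    (∃ P Q : Matrix (Fin n ⊕ Fin m) (Fin n ⊕ Fin m) K, IsUnit P ∧ IsUnit Q ∧
      P * Matrix.fromBlocks A C 0 B * Q = Matrix.fromBlocks A 0 0 B) := by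
  classical
  constructor
  · rintro ⟨X, Y, hXY⟩
    refine ⟨Matrix.fromBlocks 1 Y 0 1, Matrix.fromBlocks 1 (-X) 0 1, ?_, ?_, ?_⟩
    · rw [Matrix.isUnit_iff_isUnit_det, Matrix.det_fromBlocks_zero₂₁]
      simp
    · rw [Matrix.isUnit_iff_isUnit_det, Matrix.det_fromBlocks_zero₂₁]
      simp
    · simp only [Matrix.fromBlocks_multiply, Matrix.mul_one, Matrix.one_mul,
        Matrix.mul_zero, Matrix.zero_mul, add_zero, zero_add, Matrix.mul_neg]
      rw [← hXY]
      abel_nf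
      try simp
  · rintro ⟨P, Q, hP, hQ, hPQ⟩
    have hrank : (Matrix.fromBlocks A C 0 B).rank = (Matrix.fromBlocks A 0 0 B).rank := by
      rw [← hPQ,
        Matrix.rank_mul_eq_left_of_isUnit_det Q (P * Matrix.fromBlocks A C 0 B)
          ((Matrix.isUnit_iff_isUnit_det Q).mp hQ),
        Matrix.rank_mul_eq_right_of_isUnit_det P (Matrix.fromBlocks A C 0 B)
          ((Matrix.isUnit_iff_isUnit_det P).mp hP)]
    have h1 := roth_rank_lower A B C
    have h2 := roth_rank_diag_upper (K := K) A B
    set S : Submodule K (Fin n → K) :=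
      LinearMap.range A.mulVecLin ⊔ Submodule.map C.mulVecLin (LinearMap.ker B.mulVecLin)
      with hSdef
    have h3 : A.rank ≤ Module.finrank K ↥S := by
      have : A.rank = Module.finrank K ↥(LinearMap.range A.mulVecLin) := rfl
      rw [this]
      exact Submodule.finrank_mono le_sup_left
    have h4 : Module.finrank K ↥S ≤ A.rank := by omega
    have h5 : LinearMap.range A.mulVecLin = S :=
      Submodule.eq_of_le_of_finrank_le le_sup_left (by
        have : A.rank = Module.finrank K ↥(LinearMap.range A.mulVecLin) := rfl
        omega)
    exact roth_solve A B C (h5 ▸ le_sup_right)
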